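/- General PAC-Bayesian expectation bound: for any convex function D : [0,1]×[0,1] → ℝ, D( E_S R_S(G_{Q_S}), E_S R_D(G_{Q_S}) ) ≤ (1/m) [ E_S KL(Q_S ‖ P) + ln( E_S E_{h∼P} e^{m·D(R_S(h), R_D(h))} ) ]. -/

import Mathlib

open Finset Real

lemma log_jensen {ι : Type*} (t : Finset ι) (w x : ι → ℝ)
    (hw0 : ∀ i ∈ t, 0 ≤ w i) (hw1 : ∑ i ∈ t, w i = 1)
    (hx : ∀ i ∈ t, 0 < x i) :
    ∑ i ∈ t, w i * Real.log (x i) ≤ Real.log (∑ i ∈ t, w i * x i) := by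
  have := (strictConcaveOn_log_Ioi.concaveOn).le_map_sum (t := t) (w := w) (p := x)
    hw0 hw1 (fun i hi => hx i hi)
  simpa [smul_eq_mul] using this

lemma gibbs {H : Type*} [Fintype H] (Q P : H → ℝ)
    (hQ0 : ∀ h, 0 ≤ Q h) (hQ1 : ∑ h, Q h = 1)
    (hP0 : ∀ h, 0 ≤ P h) (hQP : ∀ h, P h = 0 → Q h = 0)
    (g : H → ℝ) :
    ∑ h, Q h * g h ≤ ∑ h, Q h * Real.log (Q h / P h)
      + Real.log (∑ h, P h * Real.exp (g h)) := by
  classical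
  set T : Finset H := Finset.univ.filter fun h => 0 < Q h with hT
  have hQT : ∀ h ∈ T, 0 < Q h := fun h hh => (Finset.mem_filter.1 hh).2
  have hQzero : ∀ h ∉ T, Q h = 0 := by
    intro h hh
    have : ¬ 0 < Q h := by simpa [hT] using hh
    linarith [hQ0 h]
  have hPT : ∀ h ∈ T, 0 < P h := by
    intro h hh
    rcases (hP0 h).lt_or_eq with h1 | h1
    · exact h1
    · exact absurd (hQP h h1.symm) (ne_of_gt (hQT h hh))
  have hsumT : ∑ h ∈ T, Q h = 1 := by
    rw [← hQ1]
    exact Finset.sum_subset (Finset.subset_univ T) (fun h _ hh => hQzero h hh)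
  have hTne : T.Nonempty := by
    by_contra hne
    rw [Finset.not_nonempty_iff_eq_empty] at hne
    simp [hne] at hsumT
  have e1 : ∑ h, Q h * g h = ∑ h ∈ T, Q h * g h :=
    (Finset.sum_subset (Finset.subset_univ T) (fun h _ hh => by simp [hQzero h hh])).symm
  have e2 : ∑ h, Q h * Real.log (Q h / P h) = ∑ h ∈ T, Q h * Real.log (Q h / P h) :=
    (Finset.sum_subset (Finset.subset_univ T) (fun h _ hh => by simp [hQzero h hh])).symm
  have key : ∑ h ∈ T, Q h * g h - ∑ h ∈ T, Q h * Real.log (Q h / P h)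
      = ∑ h ∈ T, Q h * Real.log (P h * Real.exp (g h) / Q h) := by
    rw [← Finset.sum_sub_distrib]
    refine Finset.sum_congr rfl fun h hh => ?_
    have hq := hQT h hh; have hp := hPT h hh
    rw [Real.log_div (by positivity) (ne_of_gt hq),
        Real.log_mul (ne_of_gt hp) (Real.exp_ne_zero _),
        Real.log_exp, Real.log_div (ne_of_gt hq) (ne_of_gt hp)]
    ring
  have jx : ∑ h ∈ T, Q h * Real.log (P h * Real.exp (g h) / Q h)
      ≤ Real.log (∑ h ∈ T, Q h * (P h * Real.exp (g h) / Q h)) :=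
    log_jensen T _ _ (fun h hh => (hQT h hh).le) hsumT
      (fun h hh => by have h1 := hPT h hh; have h2 := hQT h hh; positivity)
  have e3 : ∑ h ∈ T, Q h * (P h * Real.exp (g h) / Q h) = ∑ h ∈ T, P h * Real.exp (g h) :=
    Finset.sum_congr rfl fun h hh => by
      have h2 := hQT h hh; field_simp
  rw [e3] at jx
  have hposT : 0 < ∑ h ∈ T, P h * Real.exp (g h) :=
    Finset.sum_pos (fun h hh => by have h1 := hPT h hh; positivity) hTne
  have le4 : Real.log (∑ h ∈ T, P h * Real.exp (g h))
      ≤ Real.log (∑ h, P h * Real.exp (g h)) :=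
    Real.log_le_log hposT (Finset.sum_le_sum_of_subset_of_nonneg (Finset.subset_univ T)
      (fun h _ _ => by have h1 := hP0 h; positivity))
  rw [e1, e2]
  linarith



/-- General PAC-Bayesian expectation bound: for any jointly convex
`D : [0,1]×[0,1] → ℝ` (here `f`),
`D(E_S R_S(G_{Q_S}), E_S R_D(G_{Q_S})) ≤ (1/m)[E_S KL(Q_S‖P) + ln(E_S E_{h∼P} e^{m·D(R_S(h), R_D(h))})]`.
The data distribution is a discrete distribution `D` on `X × Bool`
(`true ↦ label 1`, `false ↦ label −1`), a sample of size `m` is a map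
`Fin m → X × Bool` with i.i.d. weight `∏ i, D (s i)`, and `Q` maps each sample
to a posterior over the finite voter set `H`, absolutely continuous w.r.t. `P`. -/
theorem pac_bayes_expectation_bound
    {X H : Type*} [Fintype X] [Fintype H] (m : ℕ) (hm : 0 < m)
    (v : H → X → ℝ) (hv : ∀ h x, v h x = 1 ∨ v h x = -1)
    (D : X × Bool → ℝ) (hD0 : ∀ z, 0 ≤ D z) (hD1 : ∑ z, D z = 1)
    (P : H → ℝ) (hP0 : ∀ h, 0 ≤ P h) (hP1 : ∑ h, P h = 1)
    (Q : (Fin m → X × Bool) → H → ℝ)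
    (hQ0 : ∀ s h, 0 ≤ Q s h) (hQ1 : ∀ s, ∑ h, Q s h = 1)
    (hQP : ∀ s h, P h = 0 → Q s h = 0)
    (f : ℝ → ℝ → ℝ)
    (hf : ConvexOn ℝ ((Set.Icc (0 : ℝ) 1) ×ˢ (Set.Icc (0 : ℝ) 1))
            (fun q : ℝ × ℝ => f q.1 q.2)) :
    -- error indicator of voter h on example z :
    let err : H → X × Bool → ℝ := fun h z =>
      if v h z.1 = (if z.2 then (1 : ℝ) else -1) then 0 else 1
    -- true and empirical risks of voter h :
    let RD : H → ℝ := fun h => ∑ z, D z * err h z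
    let RS : (Fin m → X × Bool) → H → ℝ := fun s h => (∑ i, err h (s i)) / m
    -- expectation over samples S ∼ D^m :
    let ES : ((Fin m → X × Bool) → ℝ) → ℝ := fun g =>
      ∑ s : Fin m → X × Bool, (∏ i, D (s i)) * g s
    f (ES fun s => ∑ h, Q s h * RS s h) (ES fun s => ∑ h, Q s h * RD h)
      ≤ (1 / m) *
        ((ES fun s => ∑ h, Q s h * Real.log (Q s h / P h))
          + Real.log (ES fun s => ∑ h, P h * Real.exp (m * f (RS s h) (RD h)))) := by
  
  classical
  intro err RD RS ES
  have hm' : (0:ℝ) < m := by exact_mod_cast hm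
  have herr0 : ∀ h z, 0 ≤ err h z := by
    intro h z; simp only [err]; split <;> split <;> norm_num
  have herr1 : ∀ h z, err h z ≤ 1 := by
    intro h z; simp only [err]; split <;> split <;> norm_num
  have hRS : ∀ s h, RS s h ∈ Set.Icc (0:ℝ) 1 := by
    intro s h
    constructor
    · exact div_nonneg (Finset.sum_nonneg fun i _ => herr0 h (s i)) hm'.le
    · rw [div_le_one hm']
      calc ∑ i, err h (s i) ≤ ∑ _i : Fin m, (1:ℝ) :=
            Finset.sum_le_sum fun i _ => herr1 h (s i)
        _ = m := by simp
  have hRD : ∀ h, RD h ∈ Set.Icc (0:ℝ) 1 := by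
    intro h
    constructor
    · exact Finset.sum_nonneg fun z _ => mul_nonneg (hD0 z) (herr0 h z)
    · calc ∑ z, D z * err h z ≤ ∑ z, D z * 1 :=
            Finset.sum_le_sum fun z _ => mul_le_mul_of_nonneg_left (herr1 h z) (hD0 z)
        _ = 1 := by simp [hD1]
  have hw0 : ∀ s : Fin m → X × Bool, 0 ≤ ∏ i, D (s i) :=
    fun s => Finset.prod_nonneg fun i _ => hD0 (s i)
  have hw1 : ∑ s : Fin m → X × Bool, ∏ i, D (s i) = 1 := by
    have h1 : ∑ s ∈ Fintype.piFinset (fun _ : Fin m => (Finset.univ : Finset (X × Bool))),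
        ∏ i, D (s i) = ∏ _i : Fin m, ∑ z, D z :=
      (Finset.prod_univ_sum _ _).symm
    simpa [Fintype.piFinset_univ, hD1] using h1
  -- Step A: joint Jensen
  have stepA : f (ES fun s => ∑ h, Q s h * RS s h) (ES fun s => ∑ h, Q s h * RD h)
      ≤ ∑ s : Fin m → X × Bool, (∏ i, D (s i)) * ∑ h, Q s h * f (RS s h) (RD h) := by
    set w : (Fin m → X × Bool) × H → ℝ := fun p => (∏ i, D (p.1 i)) * Q p.1 p.2 with hw
    set pt : (Fin m → X × Bool) × H → ℝ × ℝ := fun p => (RS p.1 p.2, RD p.2) with hpt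
    have hw0' : ∀ p ∈ Finset.univ (α := (Fin m → X × Bool) × H), 0 ≤ w p :=
      fun p _ => mul_nonneg (hw0 p.1) (hQ0 p.1 p.2)
    have hw1' : ∑ p : (Fin m → X × Bool) × H, w p = 1 := by
      rw [Fintype.sum_prod_type]
      simp only [hw, ← Finset.mul_sum]
      simp [hQ1, hw1]
    have hmem : ∀ p ∈ Finset.univ (α := (Fin m → X × Bool) × H),
        pt p ∈ (Set.Icc (0 : ℝ) 1) ×ˢ (Set.Icc (0 : ℝ) 1) :=
      fun p _ => ⟨hRS p.1 p.2, hRD p.2⟩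
    have hjen := hf.map_sum_le hw0' hw1' hmem
    have hfst : (∑ p : (Fin m → X × Bool) × H, w p • pt p).1
        = ES fun s => ∑ h, Q s h * RS s h := by
      rw [Prod.fst_sum]
      rw [Fintype.sum_prod_type]
      simp only [ES, Finset.mul_sum]
      exact Finset.sum_congr rfl fun s _ => Finset.sum_congr rfl fun h _ => by
        simp [hw, hpt, smul_eq_mul]; ring
    have hsnd : (∑ p : (Fin m → X × Bool) × H, w p • pt p).2
        = ES fun s => ∑ h, Q s h * RD h := by
      rw [Prod.snd_sum]
      rw [Fintype.sum_prod_type]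
      simp only [ES, Finset.mul_sum]
      exact Finset.sum_congr rfl fun s _ => Finset.sum_congr rfl fun h _ => by
        simp [hw, hpt, smul_eq_mul]; ring
    have hrhs : ∑ p : (Fin m → X × Bool) × H, w p • (fun q : ℝ × ℝ => f q.1 q.2) (pt p)
        = ∑ s : Fin m → X × Bool, (∏ i, D (s i)) * ∑ h, Q s h * f (RS s h) (RD h) := by
      rw [Fintype.sum_prod_type]
      simp only [Finset.mul_sum]
      exact Finset.sum_congr rfl fun s _ => Finset.sum_congr rfl fun h _ => by
        simp [hw, hpt, smul_eq_mul]; ring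
    rw [← hfst, ← hsnd, ← hrhs]
    exact hjen
  -- Step B: change of measure for each sample
  have stepB : ∀ s, ∑ h, Q s h * f (RS s h) (RD h)
      ≤ (1 / m) * ((∑ h, Q s h * Real.log (Q s h / P h))
          + Real.log (∑ h, P h * Real.exp (m * f (RS s h) (RD h)))) := by
    intro s
    have hg := gibbs (Q s) P (hQ0 s) (hQ1 s) hP0 (hQP s)
      (fun h => m * f (RS s h) (RD h))
    rw [one_div, inv_mul_eq_div, le_div_iff₀ hm']
    calc (∑ h, Q s h * f (RS s h) (RD h)) * m
        = ∑ h, Q s h * (m * f (RS s h) (RD h)) := by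
          rw [Finset.sum_mul]; exact Finset.sum_congr rfl fun h _ => by ring
      _ ≤ _ := hg
  -- positivity of inner exponential sums
  have hApos : ∀ s : Fin m → X × Bool,
      0 < ∑ h, P h * Real.exp (m * f (RS s h) (RD h)) := by
    intro s
    obtain ⟨h0, hh0⟩ : ∃ h, 0 < P h := by
      by_contra hc
      push_neg at hc
      have : ∑ h, P h = 0 := le_antisymm (Finset.sum_nonpos fun h _ => hc h)
        (Finset.sum_nonneg fun h _ => hP0 h)
      rw [hP1] at this; norm_num at this
    refine Finset.sum_pos' (fun h _ => by have := hP0 h; positivity) ⟨h0, Finset.mem_univ h0, ?_⟩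
    positivity
  -- Step C: combine
  have stepC : ∑ s : Fin m → X × Bool, (∏ i, D (s i)) * ∑ h, Q s h * f (RS s h) (RD h)
      ≤ ∑ s : Fin m → X × Bool, (∏ i, D (s i)) *
        ((1 / m) * ((∑ h, Q s h * Real.log (Q s h / P h))
          + Real.log (∑ h, P h * Real.exp (m * f (RS s h) (RD h))))) :=
    Finset.sum_le_sum fun s _ => mul_le_mul_of_nonneg_left (stepB s) (hw0 s)
  have logJ : ∑ s : Fin m → X × Bool, (∏ i, D (s i)) *
        Real.log (∑ h, P h * Real.exp (m * f (RS s h) (RD h)))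
      ≤ Real.log (ES fun s => ∑ h, P h * Real.exp (m * f (RS s h) (RD h))) := by
    exact log_jensen Finset.univ _ _ (fun s _ => hw0 s) hw1 (fun s _ => hApos s)
  have expand : ∑ s : Fin m → X × Bool, (∏ i, D (s i)) *
        ((1 / m) * ((∑ h, Q s h * Real.log (Q s h / P h))
          + Real.log (∑ h, P h * Real.exp (m * f (RS s h) (RD h)))))
      = (1 / m) * ((ES fun s => ∑ h, Q s h * Real.log (Q s h / P h))
          + ∑ s : Fin m → X × Bool, (∏ i, D (s i)) *
              Real.log (∑ h, P h * Real.exp (m * f (RS s h) (RD h)))) := by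
    simp only [ES]
    rw [← Finset.sum_add_distrib, Finset.mul_sum]
    exact Finset.sum_congr rfl fun s _ => by ring
  calc f (ES fun s => ∑ h, Q s h * RS s h) (ES fun s => ∑ h, Q s h * RD h)
      ≤ _ := stepA
    _ ≤ _ := stepC
    _ = _ := expand
    _ ≤ (1 / m) * ((ES fun s => ∑ h, Q s h * Real.log (Q s h / P h))
          + Real.log (ES fun s => ∑ h, P h * Real.exp (m * f (RS s h) (RD h)))) := by
        apply mul_le_mul_of_nonneg_left _ (by positivity)
        exact add_le_add_right logJ _
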